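/- Let n be a positive integer, A_c an n×n real matrix, λ > 0, and k_s ≥ 0. Suppose ⟪v, A_c v⟫ ≤ −λ‖v‖² for all v ∈ ℝⁿ (Euclidean inner product and norm). If e : [0,∞) → ℝⁿ is differentiable and satisfies ė(t) = A_c e(t) − k_s·sgn(e(t)) for all t ≥ 0, then ‖e(t)‖ ≤ e^{−λt}‖e(0)‖ for all t ≥ 0; in particular e(t) → 0 as t → ∞ (asymptotic convergence of the tracking error under the desired error dynamics). -/

import Mathlib

open scoped RealInnerProductSpace

/-- Componentwise sign function: `sgn(v)ᵢ = 1` if `vᵢ > 0`, `−1` if `vᵢ < 0`, `0` if `vᵢ = 0`. -/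
noncomputable def signVec {n : ℕ} (v : EuclideanSpace ℝ (Fin n)) :
    EuclideanSpace ℝ (Fin n) := WithLp.toLp 2 (fun i => Real.sign (v i))

/-- Matrix-vector multiplication on Euclidean space. -/
def mulVecE {n : ℕ} (A : Matrix (Fin n) (Fin n) ℝ) (v : EuclideanSpace ℝ (Fin n)) :
    EuclideanSpace ℝ (Fin n) := WithLp.toLp 2 (fun i => ∑ j, A i j * v j)

lemma inner_signVec_nonneg {n : ℕ} (v : EuclideanSpace ℝ (Fin n)) :
    0 ≤ ⟪v, signVec v⟫ := by
  rw [PiLp.inner_apply]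
  apply Finset.sum_nonneg
  intro i _
  simp only [RCLike.inner_apply, conj_trivial, signVec]
  rcases lt_trichotomy (v i) 0 with h | h | h
  · rw [Real.sign_of_neg h]; nlinarith
  · simp [h]
  · rw [Real.sign_of_pos h]; nlinarith

/-- Under the desired error dynamics `ė = A_c e − k_s sgn(e)` with the symmetric part of
`A_c` negative definite (`⟪v, A_c v⟫ ≤ −λ‖v‖²`) and `k_s ≥ 0`, the tracking error decays
exponentially: `‖e(t)‖ ≤ e^{−λt}‖e(0)‖` for `t ≥ 0`; in particular `e(t) → 0` as `t → ∞`. -/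
theorem desired_error_dynamics_convergence (n : ℕ) (hn : 0 < n)
    (A_c : Matrix (Fin n) (Fin n) ℝ) (lam k_s : ℝ) (hlam : 0 < lam) (hks : 0 ≤ k_s)
    (hA : ∀ v : EuclideanSpace ℝ (Fin n), ⟪v, mulVecE A_c v⟫ ≤ -lam * ‖v‖ ^ 2)
    (e : ℝ → EuclideanSpace ℝ (Fin n))
    (hde : ∀ t ≥ (0 : ℝ), HasDerivAt e (mulVecE A_c (e t) - k_s • signVec (e t)) t) :
    (∀ t ≥ (0 : ℝ), ‖e t‖ ≤ Real.exp (-lam * t) * ‖e 0‖) ∧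
      Filter.Tendsto e Filter.atTop (nhds 0) := by
  set g : ℝ → ℝ := fun t => ⟪e t, e t⟫ with hg
  set g' : ℝ → ℝ := fun t =>
    ⟪e t, mulVecE A_c (e t) - k_s • signVec (e t)⟫ +
      ⟪mulVecE A_c (e t) - k_s • signVec (e t), e t⟫ with hg'
  have hgd : ∀ x ≥ (0 : ℝ), HasDerivAt g (g' x) x := fun x hx =>
    (hde x hx).inner ℝ (hde x hx)
  have hbound : ∀ x ≥ (0 : ℝ), g' x ≤ (-2 * lam) * g x := by
    intro x hx
    have h1 : ⟪e x, mulVecE A_c (e x) - k_s • signVec (e x)⟫ ≤ -lam * g x := by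
      rw [inner_sub_right, inner_smul_right]
      have := hA (e x)
      have h2 := inner_signVec_nonneg (e x)
      have h3 : g x = ‖e x‖ ^ 2 := real_inner_self_eq_norm_sq (e x)
      nlinarith
    have h2 : ⟪mulVecE A_c (e x) - k_s • signVec (e x), e x⟫ ≤ -lam * g x := by
      rw [real_inner_comm]; exact h1
    simp only [hg']
    linarith
  have key : ∀ t ≥ (0 : ℝ), g t ≤ g 0 * Real.exp (-2 * lam * t) := by
    intro t ht
    have := le_gronwallBound_of_liminf_deriv_right_le (f := g) (f' := g')
      (δ := g 0) (K := -2 * lam) (ε := 0) (a := 0) (b := t)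
      (fun x hx => (hgd x hx.1).continuousAt.continuousWithinAt)
      (fun x hx r hr =>
        ((hgd x hx.1).hasDerivWithinAt (s := Set.Ici x)).liminf_right_slope_le hr)
      le_rfl
      (fun x hx => by simpa using hbound x hx.1)
      t ⟨ht, le_rfl⟩
    simpa [gronwallBound_ε0] using this
  have hnorm : ∀ t ≥ (0 : ℝ), ‖e t‖ ≤ Real.exp (-lam * t) * ‖e 0‖ := by
    intro t ht
    have h1 := key t ht
    have h3 : g t = ‖e t‖ ^ 2 := real_inner_self_eq_norm_sq (e t)
    have h4 : g 0 = ‖e 0‖ ^ 2 := real_inner_self_eq_norm_sq (e 0)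
    have hexp : Real.exp (-2 * lam * t) = (Real.exp (-lam * t)) ^ 2 := by
      rw [← Real.exp_nat_mul]; ring_nf
    have h5 : ‖e t‖ ^ 2 ≤ (Real.exp (-lam * t) * ‖e 0‖) ^ 2 := by
      rw [mul_pow, ← hexp]
      calc ‖e t‖ ^ 2 = g t := h3.symm
        _ ≤ g 0 * Real.exp (-2 * lam * t) := h1
        _ = Real.exp (-2 * lam * t) * ‖e 0‖ ^ 2 := by rw [h4]; ring
    nlinarith [norm_nonneg (e t), norm_nonneg (e 0), Real.exp_pos (-lam * t),
      mul_nonneg (Real.exp_pos (-lam * t)).le (norm_nonneg (e 0))]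
  refine ⟨hnorm, ?_⟩
  rw [tendsto_zero_iff_norm_tendsto_zero]
  have hsq : Filter.Tendsto (fun t => Real.exp (-lam * t) * ‖e 0‖) Filter.atTop (nhds 0) := by
    have : Filter.Tendsto (fun t => Real.exp (-lam * t)) Filter.atTop (nhds 0) := by
      have hnl : Filter.Tendsto (fun t : ℝ => -lam * t) Filter.atTop Filter.atBot :=
        Filter.Tendsto.const_mul_atTop_of_neg (by linarith) Filter.tendsto_id
      exact Real.tendsto_exp_atBot.comp hnl
    simpa using this.mul_const ‖e 0‖
  apply squeeze_zero' (Filter.eventually_atTop.2 ⟨0, fun t ht => norm_nonneg _⟩)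
    (Filter.eventually_atTop.2 ⟨0, fun t ht => hnorm t ht⟩) hsq
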